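/- Consider a continuous convex smooth game in which every player i runs OptDA with a regularizer h_i on X_i and the adaptive learning rate. Then for every bounded set K ⊆ Π_j X_j there exists a constant C ∈ ℝ such that for all T ≥ 1 and all a = (a_1,…,a_N) ∈ K, the social regret satisfies Σ_{i=1}^{N} Σ_{t=1}^{T} (ℓ_i(x_t) − ℓ_i(a_i, x_t^{−i})) ≤ C, where x_t = (X_{t+1/2}^j)_j is the profile of realized actions at round t and (a_i, x_t^{−i}) denotes the profile x_t with its i-th component replaced by a_i. -/

import Mathlib

open scoped RealInnerProductSpace
open Filter Finset Topology

noncomputable section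

/-- Bregman divergence of a regularizer `h` with gradient map `Gh`. -/
def breg {F : Type*} [NormedAddCommGroup F] [InnerProductSpace ℝ F]
    (h : F → ℝ) (Gh : F → F) (p x : F) : ℝ :=
  h p - h x - ⟪Gh x, p - x⟫

/-- `h` is a regularizer on `X`: a convex differentiable function with gradient map `Gh`
that is `1`-strongly convex on `X`. -/
structure IsRegularizer {F : Type*} [NormedAddCommGroup F] [InnerProductSpace ℝ F]
    (X : Set F) (h : F → ℝ) (Gh : F → F) : Prop where
  convex : ConvexOn ℝ Set.univ h
  grad : ∀ x : F, HasFDerivAt h (innerSL ℝ (Gh x)) x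
  strong : StrongConvexOn X 1 h

/-- The adaptive learning rate `η_t = √(1 + ∑_{s=1}^{t-1} ‖g_s - g_{s-1}‖²)`. -/
def adaEta {F : Type*} [NormedAddCommGroup F] [InnerProductSpace ℝ F]
    (g : ℕ → F) (t : ℕ) : ℝ :=
  Real.sqrt (1 + ∑ s ∈ Finset.Ico 1 t, ‖g s - g (s - 1)‖ ^ 2)

/-- OptDA iterates: `Z t` is the base state `X_t` and `W t` is the played action `X_{t+1/2}`,
for feedback `g` (with `g 0 = 0`) and positive nondecreasing learning rates `η`. -/
structure IsOptDA {F : Type*} [NormedAddCommGroup F] [InnerProductSpace ℝ F]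
    (X : Set F) (h : F → ℝ) (Gh : F → F)
    (η : ℕ → ℝ) (g : ℕ → F) (Z W : ℕ → F) : Prop where
  g_zero : g 0 = 0
  eta_pos : ∀ t : ℕ, 1 ≤ t → 0 < η t
  eta_mono : ∀ t : ℕ, 1 ≤ t → η t ≤ η (t + 1)
  base_mem : ∀ t : ℕ, 1 ≤ t → Z t ∈ X
  lead_mem : ∀ t : ℕ, 1 ≤ t → W t ∈ X
  base_min : ∀ t : ℕ, 1 ≤ t → ∀ p ∈ X,
    ⟪∑ s ∈ Finset.Ico 1 t, g s, Z t⟫ + η t * h (Z t)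
      ≤ ⟪∑ s ∈ Finset.Ico 1 t, g s, p⟫ + η t * h p
  lead_min : ∀ t : ℕ, 1 ≤ t → ∀ p ∈ X,
    ⟪g (t - 1), W t⟫ + η t * breg h Gh (W t) (Z t)
      ≤ ⟪g (t - 1), p⟫ + η t * breg h Gh p (Z t)

section AuxCalc
variable {F : Type*} [NormedAddCommGroup F] [InnerProductSpace ℝ F]

/-- First-order optimality: at a minimizer over a convex set, the directional
derivative toward any point of the set is nonnegative. -/
lemma min_dir_deriv {X : Set F} (hX : Convex ℝ X) {f : F → ℝ} {f' : F →L[ℝ] ℝ}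
    {x : F} (hx : x ∈ X) (hmin : ∀ p ∈ X, f x ≤ f p) (hf : HasFDerivAt f f' x)
    {p : F} (hp : p ∈ X) : 0 ≤ f' (p - x) := by
  set γ : ℝ → F := fun s => x + s • (p - x) with hγdef
  have hγ0 : γ 0 = x := by simp [hγdef]
  have hγd : HasDerivAt γ (p - x) 0 := by
    convert ((hasDerivAt_id (0:ℝ)).smul_const (p - x)).const_add x using 1 <;> simp [hγdef]
  have hcomp : HasDerivAt (f ∘ γ) (f' (p - x)) 0 :=
    hf.comp_hasDerivAt_of_eq 0 hγd hγ0.symm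
  have hts : Tendsto (slope (f ∘ γ) 0) (𝓝[>] (0:ℝ)) (𝓝 (f' (p - x))) :=
    (hasDerivAt_iff_tendsto_slope.1 hcomp).mono_left
      (nhdsWithin_mono 0 (fun s hs => ne_of_gt hs))
  refine ge_of_tendsto hts ?_
  filter_upwards [Ioc_mem_nhdsGT (zero_lt_one)] with s hs
  have hsX : γ s ∈ X := by
    have h1 : γ s = (1 - s) • x + s • p := by
      simp [hγdef, smul_sub, sub_smul]; abel
    rw [h1]
    exact hX hx hp (by linarith [hs.2]) (le_of_lt hs.1) (by ring)
  have hfs : f x ≤ f (γ s) := hmin _ hsX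
  have h2 : slope (f ∘ γ) 0 s = (f (γ s) - f x) / s := by
    rw [slope_def_field]
    simp [hγ0]
  rw [h2]
  apply div_nonneg (by linarith) (le_of_lt hs.1)

/-- A convex differentiable function lies above its tangents (on a convex set). -/
lemma convex_above_tangent {X : Set F} {f : F → ℝ}
    (hcv : ConvexOn ℝ X f) {f' : F →L[ℝ] ℝ}
    {x : F} (hx : x ∈ X) (hf : HasFDerivAt f f' x) {p : F} (hp : p ∈ X) :
    f x + f' (p - x) ≤ f p := by
  set γ : ℝ → F := fun s => x + s • (p - x) with hγdef
  have hγ0 : γ 0 = x := by simp [hγdef]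
  have hγd : HasDerivAt γ (p - x) 0 := by
    convert ((hasDerivAt_id (0:ℝ)).smul_const (p - x)).const_add x using 1 <;> simp [hγdef]
  have hcomp : HasDerivAt (f ∘ γ) (f' (p - x)) 0 :=
    hf.comp_hasDerivAt_of_eq 0 hγd hγ0.symm
  have hts : Tendsto (slope (f ∘ γ) 0) (𝓝[>] (0:ℝ)) (𝓝 (f' (p - x))) :=
    (hasDerivAt_iff_tendsto_slope.1 hcomp).mono_left
      (nhdsWithin_mono 0 (fun s hs => ne_of_gt hs))
  have key : f' (p - x) ≤ f p - f x := by
    refine le_of_tendsto hts ?_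
    filter_upwards [Ioc_mem_nhdsGT (zero_lt_one)] with s hs
    have h1 : γ s = (1 - s) • x + s • p := by
      simp [hγdef, smul_sub, sub_smul]; abel
    have hfs : f (γ s) ≤ (1 - s) * f x + s * f p := by
      rw [h1]
      exact hcv.2 hx hp (by linarith [hs.2]) (le_of_lt hs.1) (by ring)
    have h2 : slope (f ∘ γ) 0 s = (f (γ s) - f x) / s := by
      rw [slope_def_field]
      simp [hγ0]
    rw [h2]
    rw [div_le_iff₀ hs.1]
    nlinarith [hs.1]
  linarith

lemma breg_three (h : F → ℝ) (Gh : F → F) (p x y : F) :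
    breg h Gh p x - breg h Gh p y - breg h Gh y x = ⟪Gh y - Gh x, p - y⟫ := by
  simp only [breg, inner_sub_left, inner_sub_right]
  ring

lemma breg_nonneg {h : F → ℝ} {Gh : F → F} (hconv : ConvexOn ℝ Set.univ h)
    (hgrad : ∀ x : F, HasFDerivAt h (innerSL ℝ (Gh x)) x) (p x : F) :
    0 ≤ breg h Gh p x := by
  have := convex_above_tangent (X := Set.univ) hconv (Set.mem_univ x)
    (hgrad x) (Set.mem_univ p)
  simp only [innerSL_apply_apply] at this
  simp only [breg]
  linarith

lemma half_sq_le_breg {X : Set F} {h : F → ℝ} {Gh : F → F} (hsc : StrongConvexOn X 1 h)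
    (hgrad : ∀ x : F, HasFDerivAt h (innerSL ℝ (Gh x)) x)
    {p x : F} (hp : p ∈ X) (hx : x ∈ X) :
    2⁻¹ * ‖p - x‖ ^ 2 ≤ breg h Gh p x := by
  have hcv : ConvexOn ℝ X fun z => h z - 1 / (2:ℝ) * ‖z‖ ^ 2 :=
    strongConvexOn_iff_convex.mp hsc
  have hd : HasFDerivAt (fun z => h z - 1 / (2:ℝ) * ‖z‖ ^ 2)
      (innerSL ℝ (Gh x) - (1 / (2:ℝ)) • (2 • innerSL ℝ x)) x :=
    (hgrad x).sub (((hasStrictFDerivAt_norm_sq x).hasFDerivAt).const_mul (1 / (2:ℝ)))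
  have key := convex_above_tangent hcv hx hd hp
  simp only [ContinuousLinearMap.sub_apply, ContinuousLinearMap.smul_apply,
    innerSL_apply_apply, smul_eq_mul, nsmul_eq_mul] at key
  have hexp : ‖p - x‖ ^ 2 = ‖p‖ ^ 2 - 2 * ⟪p, x⟫ + ‖x‖ ^ 2 := norm_sub_sq_real p x
  have hix : ⟪x, p - x⟫ = ⟪x, p⟫ - ‖x‖ ^ 2 := by
    rw [inner_sub_right, real_inner_self_eq_norm_sq]
  have hcomm : ⟪x, p⟫ = ⟪p, x⟫ := real_inner_comm p x
  simp only [breg]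
  nlinarith [key]

variable {X : Set F} {h : F → ℝ} {Gh : F → F} {η : ℕ → ℝ} {g : ℕ → F} {Z W : ℕ → F}

/-- Strong first-order optimality of the base iterate. -/
lemma Z_opt (hX : Convex ℝ X) (hreg : IsRegularizer X h Gh)
    (hrun : IsOptDA X h Gh η g Z W) {t : ℕ} (ht : 1 ≤ t) {p : F} (hp : p ∈ X) :
    ⟪∑ s ∈ Finset.Ico 1 t, g s, Z t⟫ + η t * h (Z t) + η t * breg h Gh p (Z t)
      ≤ ⟪∑ s ∈ Finset.Ico 1 t, g s, p⟫ + η t * h p := by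
  set G := ∑ s ∈ Finset.Ico 1 t, g s with hG
  have hf : HasFDerivAt (fun q => ⟪G, q⟫ + η t * h q)
      (innerSL ℝ G + η t • innerSL ℝ (Gh (Z t))) (Z t) :=
    ((innerSL ℝ G).hasFDerivAt).add ((hreg.grad (Z t)).const_mul (η t))
  have h0 := min_dir_deriv hX (hrun.base_mem t ht)
    (fun p hp => hrun.base_min t ht p hp) hf hp
  simp only [ContinuousLinearMap.add_apply, ContinuousLinearMap.smul_apply,
    innerSL_apply_apply, smul_eq_mul] at h0
  simp only [breg, mul_sub]
  have h2 := inner_sub_right (𝕜 := ℝ) G p (Z t)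
  linarith [h0, h2]

/-- Three-point inequality for the leading (half) step. -/
lemma W_opt (hX : Convex ℝ X) (hreg : IsRegularizer X h Gh)
    (hrun : IsOptDA X h Gh η g Z W) {t : ℕ} (ht : 1 ≤ t) {p : F} (hp : p ∈ X) :
    ⟪g (t-1), W t - p⟫
      ≤ η t * (breg h Gh p (Z t) - breg h Gh p (W t) - breg h Gh (W t) (Z t)) := by
  have hf : HasFDerivAt (fun q => ⟪g (t-1), q⟫ + η t * breg h Gh q (Z t))
      (innerSL ℝ (g (t-1)) + η t • (innerSL ℝ (Gh (W t)) -
        (innerSL ℝ (Gh (Z t))).comp (ContinuousLinearMap.id ℝ F))) (W t) := by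
    refine ((innerSL ℝ (g (t-1))).hasFDerivAt).add (HasFDerivAt.const_mul ?_ (η t))
    show HasFDerivAt (fun q => h q - h (Z t) - ⟪Gh (Z t), q - Z t⟫) _ (W t)
    exact ((hreg.grad (W t)).sub_const (h (Z t))).sub
      (((innerSL ℝ (Gh (Z t))).hasFDerivAt.comp (W t)
        ((hasFDerivAt_id (W t)).sub_const (Z t))))
  have h0 := min_dir_deriv hX (hrun.lead_mem t ht)
    (fun p hp => hrun.lead_min t ht p hp) hf hp
  simp only [ContinuousLinearMap.add_apply, ContinuousLinearMap.smul_apply,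
    ContinuousLinearMap.sub_apply, ContinuousLinearMap.coe_comp', Function.comp_apply,
    ContinuousLinearMap.coe_id', id_eq, innerSL_apply_apply, smul_eq_mul] at h0
  have h3 := breg_three h Gh p (Z t) (W t)
  have hsl : ⟪Gh (W t) - Gh (Z t), p - W t⟫ = ⟪Gh (W t), p - W t⟫ - ⟪Gh (Z t), p - W t⟫ :=
    inner_sub_left _ _ _
  have hflip : ⟪g (t-1), W t - p⟫ = -⟪g (t-1), p - W t⟫ := by
    rw [← inner_neg_right, neg_sub]
  rw [hflip, h3, hsl]
  linarith [h0]

lemma Z1_min (hrun : IsOptDA X h Gh η g Z W) {p : F} (hp : p ∈ X) :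
    h (Z 1) ≤ h p := by
  have := hrun.base_min 1 le_rfl p hp
  simp only [Finset.Ico_self, Finset.sum_empty, inner_zero_left, zero_add] at this
  exact le_of_mul_le_mul_left this (hrun.eta_pos 1 le_rfl)

lemma telescope (hX : Convex ℝ X) (hreg : IsRegularizer X h Gh)
    (hrun : IsOptDA X h Gh η g Z W) (T : ℕ) :
    ∑ t ∈ Finset.Icc 1 T, (⟪g t, Z (t+1)⟫ + η t * breg h Gh (Z (t+1)) (Z t))
      ≤ ⟪∑ t ∈ Finset.Icc 1 T, g t, Z (T+1)⟫ + η (T+1) * (h (Z (T+1)) - h (Z 1)) := by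
  induction T with
  | zero => simp
  | succ T IH =>
    have hle : 1 ≤ T + 1 := Nat.le_add_left 1 T
    rw [Finset.sum_Icc_succ_top hle, Finset.sum_Icc_succ_top hle]
    have hZopt := Z_opt hX hreg hrun (t := T+1) hle (hrun.base_mem (T+2) (by omega))
    rw [Finset.Ico_add_one_right_eq_Icc] at hZopt
    have hmono : η (T+1) ≤ η (T+2) := hrun.eta_mono (T+1) hle
    have hz1 : h (Z 1) ≤ h (Z (T+2)) := Z1_min hrun (hrun.base_mem (T+2) (by omega))
    have hGadd : ⟪(∑ t ∈ Finset.Icc 1 T, g t) + g (T+1), Z (T+2)⟫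
        = ⟪∑ t ∈ Finset.Icc 1 T, g t, Z (T+2)⟫ + ⟪g (T+1), Z (T+2)⟫ :=
      inner_add_left _ _ _
    nlinarith [IH, hZopt, mul_le_mul_of_nonneg_right hmono (sub_nonneg.mpr hz1)]

/-- The per-player template inequality for OptDA. -/
lemma player_template (hX : Convex ℝ X) (hreg : IsRegularizer X h Gh)
    (hrun : IsOptDA X h Gh η g Z W) (hη1 : ∀ t, 1 ≤ t → 1 ≤ η t)
    (T : ℕ) {a : F} (ha : a ∈ X) :
    ∑ t ∈ Finset.Icc 1 T, ⟪g t, W t - a⟫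
      ≤ η (T+1) * (h a - h (Z 1))
        + ∑ t ∈ Finset.Icc 1 T, ‖g t - g (t-1)‖^2 / η t
        - 4⁻¹ * ∑ t ∈ Finset.Icc 1 T, (‖Z (t+1) - W t‖^2 + ‖W t - Z t‖^2) := by
  have claimA : ∀ t ∈ Finset.Icc 1 T, ⟪g t, W t - a⟫
      ≤ (⟪g t - g (t-1), W t - Z (t+1)⟫ - η t * breg h Gh (Z (t+1)) (W t)
          - η t * breg h Gh (W t) (Z t))
        + (⟪g t, Z (t+1)⟫ + η t * breg h Gh (Z (t+1)) (Z t)) - ⟪g t, a⟫ := by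
    intro t htT
    have ht : 1 ≤ t := (Finset.mem_Icc.mp htT).1
    have hW := W_opt hX hreg hrun ht (hrun.base_mem (t+1) (by omega))
    have hid : ⟪g t, W t - a⟫ = ⟪g t - g (t-1), W t - Z (t+1)⟫
        + ⟪g (t-1), W t - Z (t+1)⟫ + ⟪g t, Z (t+1)⟫ - ⟪g t, a⟫ := by
      simp only [inner_sub_left, inner_sub_right]
      ring
    rw [hid]
    linarith [hW]
  have step1 := Finset.sum_le_sum claimA
  simp only [Finset.sum_sub_distrib, Finset.sum_add_distrib] at step1
  have claimB : ∑ t ∈ Finset.Icc 1 T, (⟪g t, Z (t+1)⟫ + η t * breg h Gh (Z (t+1)) (Z t))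
      - ∑ t ∈ Finset.Icc 1 T, ⟪g t, a⟫ ≤ η (T+1) * (h a - h (Z 1)) := by
    have htel := telescope hX hreg hrun T
    have hZopt := Z_opt hX hreg hrun (t := T+1) (Nat.le_add_left 1 T) ha
    rw [Finset.Ico_add_one_right_eq_Icc] at hZopt
    have hbnn : 0 ≤ breg h Gh a (Z (T+1)) := breg_nonneg hreg.convex hreg.grad _ _
    have hsum : ⟪∑ t ∈ Finset.Icc 1 T, g t, a⟫ = ∑ t ∈ Finset.Icc 1 T, ⟪g t, a⟫ :=
      sum_inner _ _ _
    nlinarith [htel, hZopt,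
      mul_nonneg (le_of_lt (hrun.eta_pos (T+1) (Nat.le_add_left 1 T))) hbnn]
  have claimC : ∀ t ∈ Finset.Icc 1 T,
      ⟪g t - g (t-1), W t - Z (t+1)⟫ - η t * breg h Gh (Z (t+1)) (W t)
          - η t * breg h Gh (W t) (Z t)
      ≤ ‖g t - g (t-1)‖^2 / η t - 4⁻¹ * (‖Z (t+1) - W t‖^2 + ‖W t - Z t‖^2) := by
    intro t htT
    have ht : 1 ≤ t := (Finset.mem_Icc.mp htT).1
    have hη : 1 ≤ η t := hη1 t ht
    have hb1 : 2⁻¹ * ‖Z (t+1) - W t‖^2 ≤ breg h Gh (Z (t+1)) (W t) :=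
      half_sq_le_breg hreg.strong hreg.grad (hrun.base_mem (t+1) (by omega))
        (hrun.lead_mem t ht)
    have hb2 : 2⁻¹ * ‖W t - Z t‖^2 ≤ breg h Gh (W t) (Z t) :=
      half_sq_le_breg hreg.strong hreg.grad (hrun.lead_mem t ht) (hrun.base_mem t ht)
    have hcs : ⟪g t - g (t-1), W t - Z (t+1)⟫ ≤ ‖g t - g (t-1)‖ * ‖W t - Z (t+1)‖ :=
      real_inner_le_norm _ _
    have hrev : ‖W t - Z (t+1)‖ = ‖Z (t+1) - W t‖ := norm_sub_rev _ _
    set A := ‖g t - g (t-1)‖ with hA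
    set B := ‖Z (t+1) - W t‖ with hB
    set Dq := ‖W t - Z t‖ with hD
    have hA0 : 0 ≤ A := norm_nonneg _
    have hB0 : 0 ≤ B := norm_nonneg _
    have hη0 : (0:ℝ) < η t := by linarith
    have hyoung : A * B ≤ A^2 / η t + (η t) * B^2 / 4 := by
      have hnn : 0 ≤ (A - η t * B / 2)^2 / η t := div_nonneg (sq_nonneg _) (le_of_lt hη0)
      have hexp : (A - η t * B / 2)^2 / η t
          = A^2 / η t - A * B + η t * B^2 / 4 := by
        field_simp
        ring
      linarith [hexp ▸ hnn]
    have h1 : η t * (2⁻¹ * B^2) ≤ η t * breg h Gh (Z (t+1)) (W t) :=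
      mul_le_mul_of_nonneg_left hb1 (le_of_lt hη0)
    have h2 : η t * (2⁻¹ * Dq^2) ≤ η t * breg h Gh (W t) (Z t) :=
      mul_le_mul_of_nonneg_left hb2 (le_of_lt hη0)
    have hBsq : (0:ℝ) ≤ B^2 := sq_nonneg _
    have hDsq : (0:ℝ) ≤ Dq^2 := sq_nonneg _
    nlinarith [hcs, hyoung, h1, h2,
      mul_le_mul_of_nonneg_right hη hBsq, mul_le_mul_of_nonneg_right hη hDsq]
  have step2 := Finset.sum_le_sum claimC
  simp only [Finset.sum_sub_distrib] at step2
  rw [Finset.mul_sum]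
  simp only [Finset.sum_add_distrib] at claimB
  linarith [step1, claimB, step2]
end AuxCalc

section AdaEta
variable {F : Type*} [NormedAddCommGroup F] [InnerProductSpace ℝ F] {g : ℕ → F}

lemma sqrt_add_le_sqrt_add_sqrt {x y : ℝ} (hx : 0 ≤ x) (hy : 0 ≤ y) :
    Real.sqrt (x + y) ≤ Real.sqrt x + Real.sqrt y := by
  have h1 : x + y ≤ (Real.sqrt x + Real.sqrt y)^2 := by
    nlinarith [Real.sq_sqrt hx, Real.sq_sqrt hy, Real.sqrt_nonneg x, Real.sqrt_nonneg y]
  calc Real.sqrt (x + y) ≤ Real.sqrt ((Real.sqrt x + Real.sqrt y)^2) := Real.sqrt_le_sqrt h1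
  _ = Real.sqrt x + Real.sqrt y := Real.sqrt_sq (by positivity)

lemma adaEta_arg_nonneg (g : ℕ → F) (t : ℕ) :
    (0:ℝ) ≤ 1 + ∑ s ∈ Finset.Ico 1 t, ‖g s - g (s - 1)‖ ^ 2 := by positivity

lemma adaEta_one_le (g : ℕ → F) (t : ℕ) : 1 ≤ adaEta g t := by
  rw [show (1:ℝ) = Real.sqrt 1 from (Real.sqrt_one).symm]
  apply Real.sqrt_le_sqrt
  have : (0:ℝ) ≤ ∑ s ∈ Finset.Ico 1 t, ‖g s - g (s - 1)‖ ^ 2 := by positivity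
  linarith

lemma adaEta_mono (g : ℕ → F) {s t : ℕ} (hst : s ≤ t) : adaEta g s ≤ adaEta g t := by
  apply Real.sqrt_le_sqrt
  have := Finset.sum_le_sum_of_subset_of_nonneg
    (Finset.Ico_subset_Ico le_rfl hst (a₁ := 1))
    (fun i _ _ => by positivity : ∀ i ∈ Finset.Ico 1 t, i ∉ Finset.Ico 1 s →
      (0:ℝ) ≤ ‖g i - g (i - 1)‖ ^ 2)
  linarith

lemma adaEta_sq (g : ℕ → F) (t : ℕ) :
    (adaEta g (t+1))^2 = 1 + ∑ s ∈ Finset.Icc 1 t, ‖g s - g (s - 1)‖ ^ 2 := by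
  rw [adaEta, Real.sq_sqrt (adaEta_arg_nonneg g (t+1)), Finset.Ico_add_one_right_eq_Icc]

/-- Key split of the adaptive second-order sum: the rounds where the learning rate
has not yet crossed the threshold `θ` contribute a fixed constant, and afterwards
each term is controlled by `m t / θ`. -/
lemma adaptive_sum_bound {η : ℕ → ℝ} (hη : ∀ t, η t = adaEta g t)
    {θ : ℝ} (hθ : 1 ≤ θ) {m : ℕ → ℝ}
    (hm : ∀ t, 2 ≤ t → ‖g t - g (t-1)‖^2 ≤ m t) (hm0 : ∀ t, 0 ≤ m t) :
    ∃ D : ℝ, ∀ T : ℕ, ∑ t ∈ Finset.Icc 1 T, ‖g t - g (t-1)‖^2 / η t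
      ≤ D + ∑ t ∈ Finset.Icc 2 T, m t / θ := by
  classical
  have hη1 : ∀ t, 1 ≤ η t := fun t => (hη t) ▸ adaEta_one_le g t
  have hf0 : ∀ t, (0:ℝ) ≤ ‖g t - g (t-1)‖^2 / η t :=
    fun t => div_nonneg (by positivity) (by linarith [hη1 t])
  by_cases hex : ∃ t, 1 ≤ t ∧ θ ≤ η t
  · set τ := sInf {t | 1 ≤ t ∧ θ ≤ η t} with hτ
    have hτmem : 1 ≤ τ ∧ θ ≤ η τ := Nat.sInf_mem hex
    have hτle : ∀ t, τ ≤ t → θ ≤ η t := by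
      intro t htt
      calc θ ≤ η τ := hτmem.2
      _ = adaEta g τ := hη τ
      _ ≤ adaEta g t := adaEta_mono g htt
      _ = η t := (hη t).symm
    refine ⟨∑ t ∈ Finset.Icc 1 τ, ‖g t - g (t-1)‖^2 / η t, fun T => ?_⟩
    have hpt : ∀ t ∈ Finset.Icc 1 T, ‖g t - g (t-1)‖^2 / η t
        ≤ (if t ≤ τ then ‖g t - g (t-1)‖^2 / η t else 0)
          + (if τ < t then m t / θ else 0) := by
      intro t htT
      by_cases hc : t ≤ τ
      · simp only [if_pos hc, if_neg (not_lt.mpr hc), add_zero, le_refl]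
      · push_neg at hc
        simp only [if_neg (not_le.mpr hc), if_pos hc, zero_add]
        have ht2 : 2 ≤ t := by omega
        exact div_le_div₀ (hm0 t) (hm t ht2) (by linarith) (hτle t (le_of_lt hc))
    calc ∑ t ∈ Finset.Icc 1 T, ‖g t - g (t-1)‖^2 / η t ≤ _ := Finset.sum_le_sum hpt
    _ = (∑ t ∈ Finset.Icc 1 T, if t ≤ τ then ‖g t - g (t-1)‖^2 / η t else 0)
        + ∑ t ∈ Finset.Icc 1 T, (if τ < t then m t / θ else 0) := Finset.sum_add_distrib
    _ ≤ (∑ t ∈ Finset.Icc 1 τ, ‖g t - g (t-1)‖^2 / η t)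
        + ∑ t ∈ Finset.Icc 2 T, m t / θ := by
        gcongr
        · rw [← Finset.sum_filter]
          apply Finset.sum_le_sum_of_subset_of_nonneg
          · intro x hx
            simp only [Finset.mem_filter, Finset.mem_Icc] at hx ⊢
            omega
          · intro i _ _; exact hf0 i
        · rw [← Finset.sum_filter]
          apply Finset.sum_le_sum_of_subset_of_nonneg
          · intro x hx
            simp only [Finset.mem_filter, Finset.mem_Icc] at hx ⊢
            omega
          · intro i _ _
            exact div_nonneg (hm0 i) (by linarith)
  · push_neg at hex
    refine ⟨θ^2, fun T => ?_⟩
    have hsum : ∑ t ∈ Finset.Icc 1 T, ‖g t - g (t-1)‖^2 / η t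
        ≤ ∑ t ∈ Finset.Icc 1 T, ‖g t - g (t-1)‖^2 := by
      apply Finset.sum_le_sum
      intro t _
      exact div_le_self (by positivity) (hη1 t)
    have hlt : η (T+1) < θ := hex (T+1) (by omega)
    have hsq : (η (T+1))^2 = 1 + ∑ t ∈ Finset.Icc 1 T, ‖g t - g (t-1)‖^2 := by
      rw [hη]; exact adaEta_sq g T
    have hθη : (η (T+1))^2 ≤ θ^2 := by
      have := hη1 (T+1)
      nlinarith
    have hms : 0 ≤ ∑ t ∈ Finset.Icc 2 T, m t / θ :=
      Finset.sum_nonneg (fun i _ => div_nonneg (hm0 i) (by linarith))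
    linarith
end AdaEta

variable {ι : Type*} [Fintype ι] [DecidableEq ι] {E : ι → Type*}
  [∀ i, NormedAddCommGroup (E i)] [∀ i, InnerProductSpace ℝ (E i)]
  [∀ i, FiniteDimensional ℝ (E i)]

/-- The profile of actions played at round `t`, as a point of the joint space `PiLp 2 E`
(whose norm is the product norm `‖x‖ = √(∑ j ‖x j‖²)`). -/
def profileAt (W : ∀ i, ℕ → E i) (t : ℕ) : PiLp 2 E := WithLp.toLp 2 (fun j => W j t)

/-- A continuous convex smooth game: each player `i` has a nonempty closed convex action set
`X i`, a continuous loss `L i` convex in the `i`-th variable, and a Lipschitz continuous map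
`V i` selecting subgradients of `L i` in the `i`-th variable on the joint action space. -/
structure ConvexGame (X : ∀ i, Set (E i)) (L : ι → PiLp 2 E → ℝ)
    (V : ∀ i, PiLp 2 E → E i) : Prop where
  nonempty : ∀ i, (X i).Nonempty
  closed : ∀ i, IsClosed (X i)
  convexSet : ∀ i, Convex ℝ (X i)
  contLoss : ∀ i, Continuous (L i)
  convexLoss : ∀ i, ∀ x : PiLp 2 E,
    ConvexOn ℝ Set.univ fun p : E i => L i (WithLp.toLp 2 (Function.update x i p))
  lipschitzV : ∀ i, ∃ K : NNReal, LipschitzWith K (V i)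
  subgrad : ∀ i, ∀ x : PiLp 2 E, (∀ j, x j ∈ X j) → ∀ p ∈ X i,
    L i x + ⟪V i x, p - x i⟫ ≤ L i (WithLp.toLp 2 (Function.update x i p))

/-- `x` is a Nash equilibrium of the game. -/
def IsNashEq (X : ∀ i, Set (E i)) (L : ι → PiLp 2 E → ℝ) (x : PiLp 2 E) : Prop :=
  (∀ i, x i ∈ X i) ∧ ∀ i, ∀ p ∈ X i, L i x ≤ L i (WithLp.toLp 2 (Function.update x i p))

/-- The game is variationally stable. -/
def VarStable (X : ∀ i, Set (E i)) (L : ι → PiLp 2 E → ℝ)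
    (V : ∀ i, PiLp 2 E → E i) : Prop :=
  (∃ xs : PiLp 2 E, IsNashEq X L xs) ∧
    ∀ x : PiLp 2 E, (∀ j, x j ∈ X j) → ∀ xs : PiLp 2 E, IsNashEq X L xs →
      0 ≤ ∑ i, ⟪V i x, x i - xs i⟫

/-- Every player `i` runs OptDA with regularizer `h i` and the adaptive learning rate,
the feedback being the individual gradient `V i` evaluated at the realized profile. -/
structure AllOptDA (X : ∀ i, Set (E i)) (V : ∀ i, PiLp 2 E → E i)
    (h : ∀ i, E i → ℝ) (Gh : ∀ i, E i → E i)
    (η : ∀ i, ℕ → ℝ) (g : ∀ i, ℕ → E i) (Z W : ∀ i, ℕ → E i) : Prop where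
  reg : ∀ i, IsRegularizer (X i) (h i) (Gh i)
  g_zero : ∀ i, g i 0 = 0
  feedback : ∀ i, ∀ t : ℕ, 1 ≤ t → g i t = V i (profileAt W t)
  rate : ∀ i t, η i t = adaEta (g i) t
  run : ∀ i, IsOptDA (X i) (h i) (Gh i) (η i) (g i) (Z i) (W i)

set_option maxHeartbeats 1000000 in
/-- Theorem 2: if all players run OptDA with the adaptive learning rate in a continuous
convex smooth game, the social regret over any bounded comparator set is bounded. -/
theorem social_regret_bounded
    (X : ∀ i, Set (E i)) (L : ι → PiLp 2 E → ℝ) (V : ∀ i, PiLp 2 E → E i)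
    (game : ConvexGame X L V)
    (h : ∀ i, E i → ℝ) (Gh : ∀ i, E i → E i)
    (η : ∀ i, ℕ → ℝ) (g : ∀ i, ℕ → E i) (Z W : ∀ i, ℕ → E i)
    (setup : AllOptDA X V h Gh η g Z W)
    (K : Set (PiLp 2 E)) (hKbdd : Bornology.IsBounded K)
    (hKsub : ∀ a ∈ K, ∀ i, a i ∈ X i) :
    ∃ C : ℝ, ∀ T : ℕ, 1 ≤ T → ∀ a ∈ K,
      ∑ i, ∑ t ∈ Finset.Icc 1 T,
        (L i (profileAt W t) - L i (WithLp.toLp 2 (Function.update (profileAt W t) i (a i)))) ≤ C := by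
  classical
  set xp : ℕ → PiLp 2 E := profileAt W with hxp
  have hrun : ∀ i, IsOptDA (X i) (h i) (Gh i) (η i) (g i) (Z i) (W i) := setup.run
  have hη1 : ∀ i t, 1 ≤ η i t := fun i t => (setup.rate i t) ▸ adaEta_one_le (g i) t
  choose lam hlam using game.lipschitzV
  set N : ℕ := Fintype.card ι with hN
  -- Lipschitz control of the gradient increments
  have hdel : ∀ (i) (t : ℕ), 2 ≤ t → ‖g i t - g i (t-1)‖^2
      ≤ (lam i : ℝ)^2 * ‖xp t - xp (t-1)‖^2 := by
    intro i t ht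
    have h1 : g i t = V i (xp t) := setup.feedback i t (by omega)
    have h2 : g i (t-1) = V i (xp (t-1)) := setup.feedback i (t-1) (by omega)
    have h3 := (hlam i).dist_le_mul (xp t) (xp (t-1))
    rw [dist_eq_norm, dist_eq_norm] at h3
    rw [h1, h2]
    nlinarith [norm_nonneg (V i (xp t) - V i (xp (t-1))), norm_nonneg (xp t - xp (t-1)),
      (lam i).coe_nonneg, h3]
  -- thresholds and the adaptive-sum constants
  set θf : ι → ℝ := fun i => 32*((N:ℝ)+1)*(lam i : ℝ)^2 + 1 with hθf
  have hθ1 : ∀ i, 1 ≤ θf i := by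
    intro i
    have h1 : (0:ℝ) ≤ (lam i : ℝ)^2 := sq_nonneg _
    have h2 : (0:ℝ) ≤ (N:ℝ) := Nat.cast_nonneg _
    simp only [hθf]
    nlinarith
  have hDex : ∀ i, ∃ D : ℝ, ∀ T : ℕ,
      ∑ t ∈ Finset.Icc 1 T, ‖g i t - g i (t-1)‖^2 / η i t
        ≤ D + ∑ t ∈ Finset.Icc 2 T, ((lam i:ℝ)^2 * ‖xp t - xp (t-1)‖^2) / θf i :=
    fun i => adaptive_sum_bound (setup.rate i) (hθ1 i) (hdel i) (fun t => by positivity)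
  choose Dc hDc using hDex
  -- bound for the regularizers over the comparator set
  have hHex : ∀ i, ∃ H : ℝ, 0 ≤ H ∧ ∀ a ∈ K, h i (a i) - h i (Z i 1) ≤ H := by
    intro i
    have hcont : Continuous (h i) := by
      rw [continuous_iff_continuousAt]
      exact fun x => ((setup.reg i).grad x).continuousAt
    have hcont2 : Continuous fun a : PiLp 2 E => h i (a i) :=
      hcont.comp (PiLp.continuous_apply (p := 2) (β := E) i)
    have hcomp : IsCompact (closure K) := hKbdd.isCompact_closure
    have hbdd : BddAbove ((fun a : PiLp 2 E => h i (a i)) '' closure K) :=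
      hcomp.bddAbove_image hcont2.continuousOn
    obtain ⟨b, hb⟩ := hbdd
    refine ⟨max 0 (b - h i (Z i 1)), le_max_left _ _, ?_⟩
    intro a ha
    have : h i (a i) ≤ b := hb ⟨a, subset_closure ha, rfl⟩
    have := le_max_right (0:ℝ) (b - h i (Z i 1))
    linarith
  choose Hc hH0 hHK using hHex
  set c : ι → ℝ := fun i => ‖g i 1‖^2 with hc
  set A : ℝ := ∑ i, (Hc i * Real.sqrt (1 + c i) + Dc i) with hA
  set B : ℝ := ∑ i, Hc i * (lam i : ℝ) with hB
  have hB0 : 0 ≤ B :=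
    Finset.sum_nonneg fun i _ => mul_nonneg (hH0 i) (lam i).coe_nonneg
  refine ⟨A + 8*B^2, ?_⟩
  intro T hT a ha
  set Qv : ℝ := ∑ t ∈ Finset.Icc 2 T, ‖xp t - xp (t-1)‖^2 with hQv
  have hQv0 : 0 ≤ Qv := Finset.sum_nonneg fun t _ => by positivity
  set Φv : ℝ := ∑ i, ∑ t ∈ Finset.Icc 1 T,
      (‖Z i (t+1) - W i t‖^2 + ‖W i t - Z i t‖^2) with hΦv
  have hΦ0 : ∀ i, (0:ℝ) ≤ ∑ t ∈ Finset.Icc 1 T,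
      (‖Z i (t+1) - W i t‖^2 + ‖W i t - Z i t‖^2) :=
    fun i => Finset.sum_nonneg fun t _ => by positivity
  -- Step A: from losses to the linearized regret
  have stepA : ∀ i, ∑ t ∈ Finset.Icc 1 T,
      (L i (xp t) - L i (WithLp.toLp 2 (Function.update (xp t) i (a i))))
      ≤ ∑ t ∈ Finset.Icc 1 T, ⟪g i t, W i t - a i⟫ := by
    intro i
    apply Finset.sum_le_sum
    intro t htT
    have ht1 : 1 ≤ t := (Finset.mem_Icc.mp htT).1
    have hx : ∀ j, xp t j ∈ X j := fun j => (hrun j).lead_mem t ht1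
    have hsub := game.subgrad i (xp t) hx (a i) (hKsub a ha i)
    rw [setup.feedback i t ht1]
    have hxpi : xp t i = W i t := rfl
    rw [hxpi] at hsub
    have h5 : ⟪V i (xp t), W i t - a i⟫ = -⟪V i (xp t), a i - W i t⟫ := by
      rw [← inner_neg_right, neg_sub]
    linarith
  -- the learning-rate bound
  have ηbound : ∀ i, η i (T+1) ≤ Real.sqrt (1 + c i) + (lam i:ℝ) * Real.sqrt Qv := by
    intro i
    have hsplit : Finset.Icc 1 T = insert 1 (Finset.Icc 2 T) := by
      ext x
      simp only [Finset.mem_Icc, Finset.mem_insert]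
      omega
    have h1n : (1:ℕ) ∉ Finset.Icc 2 T := by simp
    have hd1 : ‖g i 1 - g i (1-1)‖^2 = c i := by
      norm_num [setup.g_zero i, hc]
    have hsum : ∑ t ∈ Finset.Icc 1 T, ‖g i t - g i (t-1)‖^2
        ≤ c i + (lam i:ℝ)^2 * Qv := by
      rw [hsplit, Finset.sum_insert h1n, hd1, hQv, Finset.mul_sum]
      have := Finset.sum_le_sum (s := Finset.Icc 2 T)
        (f := fun t => ‖g i t - g i (t-1)‖^2)
        (g := fun t => (lam i:ℝ)^2 * ‖xp t - xp (t-1)‖^2)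
        (fun t htt => hdel i t (Finset.mem_Icc.mp htt).1)
      linarith
    have hsq : (η i (T+1))^2 = 1 + ∑ t ∈ Finset.Icc 1 T, ‖g i t - g i (t-1)‖^2 := by
      rw [setup.rate]; exact adaEta_sq (g i) T
    have hle : (η i (T+1))^2 ≤ (1 + c i) + (lam i:ℝ)^2 * Qv := by
      rw [hsq]; linarith
    have hnn : 0 ≤ η i (T+1) := by linarith [hη1 i (T+1)]
    calc η i (T+1) = Real.sqrt ((η i (T+1))^2) := (Real.sqrt_sq hnn).symm
    _ ≤ Real.sqrt ((1 + c i) + (lam i:ℝ)^2 * Qv) := Real.sqrt_le_sqrt hle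
    _ ≤ Real.sqrt (1 + c i) + Real.sqrt ((lam i:ℝ)^2 * Qv) := by
        apply sqrt_add_le_sqrt_add_sqrt
        · have : (0:ℝ) ≤ c i := by positivity
          linarith
        · positivity
    _ = Real.sqrt (1 + c i) + (lam i:ℝ) * Real.sqrt Qv := by
        rw [Real.sqrt_mul (sq_nonneg _), Real.sqrt_sq (lam i).coe_nonneg]
  -- Step B: the per-player bound
  have stepB : ∀ i, ∑ t ∈ Finset.Icc 1 T, ⟪g i t, W i t - a i⟫
      ≤ (Hc i * Real.sqrt (1 + c i) + Dc i) + Hc i * (lam i:ℝ) * Real.sqrt Qv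
        + (32*((N:ℝ)+1))⁻¹ * Qv
        - 4⁻¹ * ∑ t ∈ Finset.Icc 1 T, (‖Z i (t+1) - W i t‖^2 + ‖W i t - Z i t‖^2) := by
    intro i
    have htem := player_template (game.convexSet i) (setup.reg i) (hrun i)
      (fun t _ => hη1 i t) T (hKsub a ha i)
    have hdh0 : 0 ≤ h i (a i) - h i (Z i 1) :=
      sub_nonneg.mpr (Z1_min (hrun i) (hKsub a ha i))
    have hdhH : h i (a i) - h i (Z i 1) ≤ Hc i := hHK i a ha
    have hηnn : 0 ≤ η i (T+1) := by linarith [hη1 i (T+1)]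
    have hηdh : η i (T+1) * (h i (a i) - h i (Z i 1))
        ≤ Hc i * Real.sqrt (1 + c i) + Hc i * (lam i:ℝ) * Real.sqrt Qv := by
      calc η i (T+1) * (h i (a i) - h i (Z i 1)) ≤ η i (T+1) * Hc i :=
            mul_le_mul_of_nonneg_left hdhH hηnn
      _ ≤ (Real.sqrt (1 + c i) + (lam i:ℝ) * Real.sqrt Qv) * Hc i :=
            mul_le_mul_of_nonneg_right (ηbound i) (hH0 i)
      _ = Hc i * Real.sqrt (1 + c i) + Hc i * (lam i:ℝ) * Real.sqrt Qv := by ring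
    have hadapt : ∑ t ∈ Finset.Icc 1 T, ‖g i t - g i (t-1)‖^2 / η i t
        ≤ Dc i + (32*((N:ℝ)+1))⁻¹ * Qv := by
      have h1 := hDc i T
      have h2 : ∑ t ∈ Finset.Icc 2 T, ((lam i:ℝ)^2 * ‖xp t - xp (t-1)‖^2) / θf i
          ≤ (32*((N:ℝ)+1))⁻¹ * Qv := by
        rw [hQv, Finset.mul_sum]
        apply Finset.sum_le_sum
        intro t _
        have hθpos : (0:ℝ) < θf i := by linarith [hθ1 i]
        have hNpos : (0:ℝ) < 32*((N:ℝ)+1) := by positivity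
        rw [div_le_iff₀ hθpos]
        have hmv : (0:ℝ) ≤ ‖xp t - xp (t-1)‖^2 := by positivity
        have hkey : (lam i:ℝ)^2 * (32*((N:ℝ)+1)) ≤ θf i := by
          simp only [hθf]; nlinarith
        rw [inv_mul_eq_div, div_mul_eq_mul_div, le_div_iff₀ hNpos]
        nlinarith [hmv, hkey]
      linarith
    linarith [htem, hηdh, hadapt]
  -- sum over the players
  have hsumB : ∑ i, ∑ t ∈ Finset.Icc 1 T, ⟪g i t, W i t - a i⟫
      ≤ A + B * Real.sqrt Qv + (N:ℝ) * ((32*((N:ℝ)+1))⁻¹ * Qv) - 4⁻¹ * Φv := by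
    have hle := Finset.sum_le_sum (fun i (_ : i ∈ Finset.univ) => stepB i)
    have e1 : ∑ i, ((Hc i * Real.sqrt (1 + c i) + Dc i) + Hc i * (lam i:ℝ) * Real.sqrt Qv
        + (32*((N:ℝ)+1))⁻¹ * Qv
        - 4⁻¹ * ∑ t ∈ Finset.Icc 1 T, (‖Z i (t+1) - W i t‖^2 + ‖W i t - Z i t‖^2))
        = A + B * Real.sqrt Qv + (N:ℝ) * ((32*((N:ℝ)+1))⁻¹ * Qv) - 4⁻¹ * Φv := by
      rw [Finset.sum_sub_distrib, Finset.sum_add_distrib, Finset.sum_add_distrib,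
        Finset.sum_const, Finset.card_univ, nsmul_eq_mul]
      have e2 : ∑ i, Hc i * (lam i:ℝ) * Real.sqrt Qv = B * Real.sqrt Qv := by
        rw [hB, Finset.sum_mul]
      have e3 : ∑ i, 4⁻¹ * ∑ t ∈ Finset.Icc 1 T,
          (‖Z i (t+1) - W i t‖^2 + ‖W i t - Z i t‖^2) = 4⁻¹ * Φv := by
        rw [hΦv, Finset.mul_sum]
      rw [e2, e3, hA, hN]
    rw [← e1]
    exact hle
  -- movement comparison: Qv ≤ 4 Φv
  have hQΦ : Qv ≤ 4 * Φv := by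
    have hptw : ∀ t ∈ Finset.Icc 2 T, ‖xp t - xp (t-1)‖^2
        ≤ ∑ i, (2*‖W i t - Z i t‖^2 + 2*‖Z i t - W i (t-1)‖^2) := by
      intro t _
      have hn : ‖xp t - xp (t-1)‖^2 = ∑ i, ‖W i t - W i (t-1)‖^2 := by
        rw [PiLp.norm_sq_eq_of_L2]
        rfl
      rw [hn]
      apply Finset.sum_le_sum
      intro i _
      have htr : ‖W i t - W i (t-1)‖ ≤ ‖W i t - Z i t‖ + ‖Z i t - W i (t-1)‖ :=
        norm_sub_le_norm_sub_add_norm_sub _ _ _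
      nlinarith [norm_nonneg (W i t - W i (t-1)), norm_nonneg (W i t - Z i t),
        norm_nonneg (Z i t - W i (t-1)), sq_nonneg (‖W i t - Z i t‖ - ‖Z i t - W i (t-1)‖)]
    have h1 : Qv ≤ ∑ t ∈ Finset.Icc 2 T, ∑ i,
        (2*‖W i t - Z i t‖^2 + 2*‖Z i t - W i (t-1)‖^2) := Finset.sum_le_sum hptw
    have h2 : ∑ t ∈ Finset.Icc 2 T, ∑ i, (2*‖W i t - Z i t‖^2)
        ≤ 2 * Φv := by
      rw [Finset.sum_comm, hΦv, Finset.mul_sum]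
      apply Finset.sum_le_sum
      intro i _
      rw [Finset.mul_sum]
      have hsub : ∑ t ∈ Finset.Icc 2 T, (2:ℝ)*‖W i t - Z i t‖^2
          ≤ ∑ t ∈ Finset.Icc 1 T, (2:ℝ)*‖W i t - Z i t‖^2 := by
        apply Finset.sum_le_sum_of_subset_of_nonneg
        · exact Finset.Icc_subset_Icc (by omega) le_rfl
        · intro t _ _; positivity
      calc ∑ t ∈ Finset.Icc 2 T, (2:ℝ)*‖W i t - Z i t‖^2 ≤ _ := hsub
      _ ≤ ∑ t ∈ Finset.Icc 1 T,
            (2:ℝ) * (‖Z i (t+1) - W i t‖^2 + ‖W i t - Z i t‖^2) := by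
          apply Finset.sum_le_sum
          intro t _
          nlinarith [sq_nonneg ‖Z i (t+1) - W i t‖]
    have h3 : ∑ t ∈ Finset.Icc 2 T, ∑ i, (2*‖Z i t - W i (t-1)‖^2)
        ≤ 2 * Φv := by
      have hre : Finset.Icc 2 T = (Finset.Icc 1 (T-1)).map
          (addRightEmbedding 1) := by
        rw [Finset.map_add_right_Icc]
        congr 1
        omega
      rw [hre, Finset.sum_map]
      have hterm : ∀ u ∈ Finset.Icc 1 (T-1),
          ∑ i, (2*‖Z i (addRightEmbedding 1 u) - W i ((addRightEmbedding 1 u)-1)‖^2)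
          = ∑ i, (2*‖Z i (u+1) - W i u‖^2) := by
        intro u _
        apply Finset.sum_congr rfl
        intro i _
        have : addRightEmbedding 1 u = u + 1 := rfl
        rw [this]
        norm_num
      rw [Finset.sum_congr rfl hterm, Finset.sum_comm, hΦv, Finset.mul_sum]
      apply Finset.sum_le_sum
      intro i _
      rw [Finset.mul_sum]
      have hsub : ∑ u ∈ Finset.Icc 1 (T-1), (2:ℝ)*‖Z i (u+1) - W i u‖^2
          ≤ ∑ u ∈ Finset.Icc 1 T, (2:ℝ)*‖Z i (u+1) - W i u‖^2 := by
        apply Finset.sum_le_sum_of_subset_of_nonneg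
        · exact Finset.Icc_subset_Icc le_rfl (by omega)
        · intro t _ _; positivity
      calc ∑ u ∈ Finset.Icc 1 (T-1), (2:ℝ)*‖Z i (u+1) - W i u‖^2 ≤ _ := hsub
      _ ≤ ∑ t ∈ Finset.Icc 1 T,
            (2:ℝ) * (‖Z i (t+1) - W i t‖^2 + ‖W i t - Z i t‖^2) := by
          apply Finset.sum_le_sum
          intro t _
          nlinarith [sq_nonneg ‖W i t - Z i t‖]
    have h4 : ∑ t ∈ Finset.Icc 2 T, ∑ i,
        (2*‖W i t - Z i t‖^2 + 2*‖Z i t - W i (t-1)‖^2)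
        = ∑ t ∈ Finset.Icc 2 T, ∑ i, (2*‖W i t - Z i t‖^2)
          + ∑ t ∈ Finset.Icc 2 T, ∑ i, (2*‖Z i t - W i (t-1)‖^2) := by
      rw [← Finset.sum_add_distrib]
      apply Finset.sum_congr rfl
      intro t _
      rw [← Finset.sum_add_distrib]
    linarith
  -- final numeric assembly
  have htotal := Finset.sum_le_sum (fun i (_ : i ∈ Finset.univ) => stepA i)
  have hNcoef : (N:ℝ) * ((32*((N:ℝ)+1))⁻¹ * Qv) ≤ 32⁻¹ * Qv := by
    have hNpos : (0:ℝ) < 32*((N:ℝ)+1) := by positivity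
    rw [inv_mul_eq_div, ← mul_div_assoc, div_le_iff₀ hNpos]
    have hN0 : (0:ℝ) ≤ (N:ℝ) := Nat.cast_nonneg _
    nlinarith [hQv0]
  have hsqrtQ : Real.sqrt Qv ^ 2 = Qv := Real.sq_sqrt hQv0
  have hsqrtQ0 : 0 ≤ Real.sqrt Qv := Real.sqrt_nonneg _
  have hfinal : B * Real.sqrt Qv - 32⁻¹ * Qv ≤ 8 * B^2 := by
    nlinarith [sq_nonneg (Real.sqrt Qv - 16*B)]
  calc ∑ i, ∑ t ∈ Finset.Icc 1 T,
      (L i (profileAt W t) - L i (WithLp.toLp 2 (Function.update (profileAt W t) i (a i))))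
      ≤ ∑ i, ∑ t ∈ Finset.Icc 1 T, ⟪g i t, W i t - a i⟫ := htotal
  _ ≤ A + B * Real.sqrt Qv + (N:ℝ) * ((32*((N:ℝ)+1))⁻¹ * Qv) - 4⁻¹ * Φv := hsumB
  _ ≤ A + 8*B^2 := by nlinarith [hQΦ, hNcoef, hfinal, hQv0]
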